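/- Let Φ^t be a flow on X, let B ⊆ X, let ε > 0, and set C_ε = {x : Φ^t(x) ∈ B for some 0 ≤ t < ε}, C_{2ε} = {x : Φ^t(x) ∈ B for some 0 ≤ t < 2ε} and C_{−ε} = {x : Φ^t(x) ∈ B for some −ε < t ≤ 0}. Let S be any set with C_ε ⊆ S ⊆ C_{2ε} ∪ C_{−ε}, and let τ_ε(x,S) = min{n ∈ ℕ, n ≥ 1 : Φ^{nε}(x) ∈ S} be the hitting time of the time-ε map of the flow. Then for every x ∈ X: (i) if the hitting time τ(x,B) is finite, attained (i.e. Φ^{τ(x,B)}(x) ∈ B) and satisfies τ(x,B) ≥ ε, then τ_ε(x,S) ≤ ⌊τ(x,B)/ε⌋, hence τ_ε(x,S) ≤ τ(x,B)/ε + 1; (ii) if τ_ε(x,S) is finite, then τ(x,B) ≤ ε·τ_ε(x,S) + 2ε. -/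
import Mathlib


open MeasureTheory Filter Set Topology

/-- `Φ` is a flow: time `0` is the identity and the group law holds. -/
def IsFlow {X : Type*} (Φ : ℝ → X → X) : Prop :=
  (∀ x, Φ 0 x = x) ∧ ∀ s t x, Φ (s + t) x = Φ s (Φ t x)

/-- Hitting time of a set `A` for the flow `Φ` started at `x`:
`τ(x,A) = inf {t ≥ 0 : Φᵗ x ∈ A}`. -/
noncomputable def hitTime {X : Type*} (Φ : ℝ → X → X) (x : X) (A : Set X) : ℝ :=
  sInf {t : ℝ | 0 ≤ t ∧ Φ t x ∈ A}

/-- Hitting time of a set `S` for the time-`ε` map of the flow `Φ` started at `x`: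
least `n ≥ 1` with `Φ^{nε} x ∈ S`. -/
noncomputable def hitTimeEps {X : Type*} (Φ : ℝ → X → X) (ε : ℝ) (x : X) (S : Set X) : ℕ :=
  sInf {n : ℕ | 1 ≤ n ∧ Φ ((n : ℝ) * ε) x ∈ S}

/-- Comparison between the hitting time of a target `B` for a flow and the hitting time,
for the time-`ε` map, of any set `S` with `C_ε ⊆ S ⊆ C_{2ε} ∪ C_{-ε}`:
(i) if `τ(x,B)` is finite, attained and `≥ ε` then `τ_ε(x,S) ≤ ⌊τ(x,B)/ε⌋ ≤ τ(x,B)/ε + 1`;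
(ii) if `τ_ε(x,S)` is finite then `τ(x,B) ≤ ε τ_ε(x,S) + 2ε`. -/
theorem hitting_time_flow_time_eps_map
    {X : Type*} (Φ : ℝ → X → X) (hflow : IsFlow Φ)
    (B : Set X) (ε : ℝ) (hε : 0 < ε)
    (Ce C2e Cne : Set X)
    (hCe : Ce = {x | ∃ t, 0 ≤ t ∧ t < ε ∧ Φ t x ∈ B})
    (hC2e : C2e = {x | ∃ t, 0 ≤ t ∧ t < 2 * ε ∧ Φ t x ∈ B})
    (hCne : Cne = {x | ∃ t, -ε < t ∧ t ≤ 0 ∧ Φ t x ∈ B})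
    (S : Set X) (hS1 : Ce ⊆ S) (hS2 : S ⊆ C2e ∪ Cne) (x : X) :
    (Φ (hitTime Φ x B) x ∈ B → ε ≤ hitTime Φ x B →
      hitTimeEps Φ ε x S ≤ ⌊hitTime Φ x B / ε⌋₊ ∧
      (hitTimeEps Φ ε x S : ℝ) ≤ hitTime Φ x B / ε + 1) ∧
    ({n : ℕ | 1 ≤ n ∧ Φ ((n : ℝ) * ε) x ∈ S}.Nonempty →
      hitTime Φ x B ≤ ε * (hitTimeEps Φ ε x S : ℝ) + 2 * ε) := by

  obtain ⟨h0, hadd⟩ := hflow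
  constructor
  · intro hmem hετ
    have hτ0 : 0 ≤ hitTime Φ x B := le_trans hε.le hετ
    set τ := hitTime Φ x B with hτ
    set n := ⌊τ / ε⌋₊ with hn
    have hdiv0 : 0 ≤ τ / ε := div_nonneg hτ0 hε.le
    have hn1 : 1 ≤ n := by
      rw [hn]
      exact Nat.le_floor (by simpa using (one_le_div hε).mpr hετ)
    have hfl : (n : ℝ) ≤ τ / ε := Nat.floor_le hdiv0
    have hle : (n : ℝ) * ε ≤ τ := by
      have := mul_le_mul_of_nonneg_right hfl hε.le
      rwa [div_mul_cancel₀ τ (ne_of_gt hε)] at this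
    have hlt : τ < ((n : ℝ) + 1) * ε := by
      have := Nat.lt_floor_add_one (τ / ε)
      calc τ = (τ / ε) * ε := by field_simp
        _ < ((n : ℝ) + 1) * ε := by
            exact mul_lt_mul_of_pos_right (by exact_mod_cast this) hε
    have hCmem : Φ ((n : ℝ) * ε) x ∈ Ce := by
      rw [hCe]
      refine ⟨τ - (n : ℝ) * ε, sub_nonneg.mpr hle, by nlinarith, ?_⟩
      rw [← hadd]
      simpa using hmem
    have hnin : n ∈ {m : ℕ | 1 ≤ m ∧ Φ ((m : ℝ) * ε) x ∈ S} := ⟨hn1, hS1 hCmem⟩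
    have hmain : hitTimeEps Φ ε x S ≤ n := Nat.sInf_le hnin
    refine ⟨hmain, ?_⟩
    have : (hitTimeEps Φ ε x S : ℝ) ≤ (n : ℝ) := by exact_mod_cast hmain
    linarith
  · intro hne
    have hmem := Nat.sInf_mem hne
    obtain ⟨hn1, hnS⟩ := hmem
    set n := hitTimeEps Φ ε x S with hn
    have hn1' : (1 : ℝ) ≤ (n : ℝ) := by exact_mod_cast hn1
    have hbdd : BddBelow {t : ℝ | 0 ≤ t ∧ Φ t x ∈ B} := ⟨0, fun y hy => hy.1⟩
    rcases hS2 hnS with h | h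
    · rw [hC2e] at h
      obtain ⟨t, ht0, ht2, htB⟩ := h
      have hτle : hitTime Φ x B ≤ t + (n : ℝ) * ε := by
        apply csInf_le hbdd
        refine ⟨by nlinarith, ?_⟩
        rw [hadd]; exact htB
      nlinarith
    · rw [hCne] at h
      obtain ⟨t, htn, ht0, htB⟩ := h
      have hτle : hitTime Φ x B ≤ t + (n : ℝ) * ε := by
        apply csInf_le hbdd
        refine ⟨by nlinarith, ?_⟩
        rw [hadd]; exact htB
      nlinarith
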